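/- If real numbers λ₁ ≥ λ₂ ≥ ... ≥ λₙ (with n ≥ 2) satisfy ∑ᵢ arctan(λᵢ) = Θ with Θ ≥ (n-2)π/2, then for every 1 ≤ k ≤ n-1 the elementary symmetric polynomial satisfies σ_k(λ₁,...,λₙ) ≥ 0. -/
import Mathlib


open Real

/-- The k-th elementary symmetric polynomial of μ₁,…,μₙ. -/
noncomputable def esymmF {n : ℕ} (k : ℕ) (μ : Fin n → ℝ) : ℝ :=
  ∑ s ∈ Finset.powersetCard k (Finset.univ : Finset (Fin n)), ∏ i ∈ s, μ i

open Finset in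
/-- Two-variable subadditivity of arctan on nonnegatives. -/
lemma arctan_add_le_aux {a b : ℝ} (ha : 0 ≤ a) (hb : 0 ≤ b) :
    Real.arctan (a + b) ≤ Real.arctan a + Real.arctan b := by
  rcases lt_or_ge (a * b) 1 with h | h
  · rw [Real.arctan_add h]
    apply Real.arctan_strictMono.monotone
    have h1 : 0 < 1 - a * b := by linarith
    rw [le_div_iff₀ h1]
    nlinarith [mul_nonneg (add_nonneg ha hb) (mul_nonneg ha hb)]
  · -- a*b ≥ 1, so both positive, and arctan a + arctan b ≥ π/2 > arctan (a+b)
    have hb' : 0 < b := by nlinarith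
    have hab : b⁻¹ ≤ a := by
      rw [inv_le_iff_one_le_mul₀ hb']; linarith [mul_comm a b]
    have h2 : Real.arctan b⁻¹ ≤ Real.arctan a := Real.arctan_strictMono.monotone hab
    rw [Real.arctan_inv_of_pos hb'] at h2
    have := Real.arctan_lt_pi_div_two (a + b)
    linarith

lemma arctan_sum_le {ι : Type*} (s : Finset ι) (f : ι → ℝ) (hf : ∀ i ∈ s, 0 ≤ f i) :
    Real.arctan (∑ i ∈ s, f i) ≤ ∑ i ∈ s, Real.arctan (f i) := by
  induction s using Finset.cons_induction with
  | empty => simp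
  | cons a s ha ih =>
    rw [Finset.sum_cons, Finset.sum_cons]
    have h1 : 0 ≤ f a := hf a (Finset.mem_cons_self a s)
    have h2 : ∀ i ∈ s, 0 ≤ f i := fun i hi => hf i (Finset.mem_cons.2 (Or.inr hi))
    calc Real.arctan (f a + ∑ i ∈ s, f i)
        ≤ Real.arctan (f a) + Real.arctan (∑ i ∈ s, f i) :=
          arctan_add_le_aux h1 (Finset.sum_nonneg h2)
      _ ≤ Real.arctan (f a) + ∑ i ∈ s, Real.arctan (f i) := by linarith [ih h2]

open Finset in
/-- Double counting: summing over k-sets with a marked element. -/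
lemma dc_lemma {ι : Type*} [DecidableEq ι] (A : Finset ι) (j : ℕ) (x : ι → ℝ) :
    ∑ S ∈ A.powersetCard (j + 1), ∑ i ∈ S, ∏ l ∈ S.erase i, x l
      = ∑ T ∈ A.powersetCard j, ∑ i ∈ A \ T, ∏ l ∈ T, x l := by
  rw [Finset.sum_sigma', Finset.sum_sigma']
  refine Finset.sum_nbij' (fun p => ⟨p.1.erase p.2, p.2⟩) (fun p => ⟨insert p.2 p.1, p.2⟩)
    ?_ ?_ ?_ ?_ ?_
  · rintro ⟨S, i⟩ hp
    simp only [Finset.mem_sigma, Finset.mem_powersetCard] at hp ⊢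
    obtain ⟨⟨hS, hc⟩, hi⟩ := hp
    refine ⟨⟨(Finset.erase_subset _ _).trans hS, ?_⟩, ?_⟩
    · rw [Finset.card_erase_of_mem hi, hc]; rfl
    · rw [Finset.mem_sdiff]
      exact ⟨hS hi, Finset.notMem_erase _ _⟩
  · rintro ⟨T, i⟩ hp
    simp only [Finset.mem_sigma, Finset.mem_powersetCard, Finset.mem_sdiff] at hp ⊢
    obtain ⟨⟨hT, hc⟩, hiA, hiT⟩ := hp
    refine ⟨⟨Finset.insert_subset hiA hT, ?_⟩, Finset.mem_insert_self _ _⟩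
    rw [Finset.card_insert_of_notMem hiT, hc]
  · rintro ⟨S, i⟩ hp
    simp only [Finset.mem_sigma, Finset.mem_powersetCard] at hp
    simp [Finset.insert_erase hp.2]
  · rintro ⟨T, i⟩ hp
    simp only [Finset.mem_sigma, Finset.mem_powersetCard, Finset.mem_sdiff] at hp
    simp [Finset.erase_insert hp.2.2]
  · rintro ⟨S, i⟩ _; rfl

open Finset in
/-- Key inequality: if `∑ 1/xᵢ ≤ 1/μ` with all `xᵢ > 0`, then `μ σ_{k-1} ≤ σ_k`. -/
lemma key_lemma {ι : Type*} [DecidableEq ι] (A : Finset ι) (x : ι → ℝ)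
    (hx : ∀ i ∈ A, 0 < x i) (μ : ℝ) (hμ : 0 < μ)
    (h : ∑ i ∈ A, (x i)⁻¹ ≤ μ⁻¹) (k : ℕ) (hk1 : 1 ≤ k) (hk : k ≤ A.card) :
    μ * ∑ T ∈ A.powersetCard (k - 1), ∏ l ∈ T, x l
      ≤ ∑ S ∈ A.powersetCard k, ∏ l ∈ S, x l := by
  obtain ⟨j, rfl⟩ : ∃ j, k = j + 1 := ⟨k - 1, by omega⟩
  simp only [Nat.add_sub_cancel]
  have hσj : (0:ℝ) ≤ ∑ T ∈ A.powersetCard j, ∏ l ∈ T, x l := by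
    apply Finset.sum_nonneg
    intro T hT
    rw [Finset.mem_powersetCard] at hT
    exact Finset.prod_nonneg fun l hl => (hx l (hT.1 hl)).le
  have hdc := dc_lemma A j x
  -- RHS of dc_lemma equals (A.card - j) • σ_j
  have hrhs : ∑ T ∈ A.powersetCard j, ∑ i ∈ A \ T, ∏ l ∈ T, x l
      = (A.card - j) • ∑ T ∈ A.powersetCard j, ∏ l ∈ T, x l := by
    rw [Finset.smul_sum]
    apply Finset.sum_congr rfl
    intro T hT
    rw [Finset.mem_powersetCard] at hT
    rw [Finset.sum_const, Finset.card_sdiff_of_subset hT.1, hT.2]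
  -- LHS of dc_lemma is ≤ μ⁻¹ * σ_{j+1}
  have hlhs : ∑ S ∈ A.powersetCard (j + 1), ∑ i ∈ S, ∏ l ∈ S.erase i, x l
      ≤ μ⁻¹ * ∑ S ∈ A.powersetCard (j + 1), ∏ l ∈ S, x l := by
    rw [Finset.mul_sum]
    apply Finset.sum_le_sum
    intro S hS
    rw [Finset.mem_powersetCard] at hS
    have hprod : (0:ℝ) ≤ ∏ l ∈ S, x l :=
      Finset.prod_nonneg fun l hl => (hx l (hS.1 hl)).le
    have hstep : ∑ i ∈ S, ∏ l ∈ S.erase i, x l = (∑ i ∈ S, (x i)⁻¹) * ∏ l ∈ S, x l := by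
      rw [Finset.sum_mul]
      apply Finset.sum_congr rfl
      intro i hi
      have hxi : x i ≠ 0 := (hx i (hS.1 hi)).ne'
      rw [← Finset.mul_prod_erase S x hi]
      field_simp
    rw [hstep]
    have hsub : ∑ i ∈ S, (x i)⁻¹ ≤ μ⁻¹ := by
      refine le_trans (Finset.sum_le_sum_of_subset_of_nonneg hS.1 ?_) h
      intro i hi _
      exact (inv_nonneg.2 (hx i hi).le)
    exact mul_le_mul_of_nonneg_right hsub hprod
  have hcard : 1 ≤ A.card - j := by omega
  have h1 : (∑ T ∈ A.powersetCard j, ∏ l ∈ T, x l)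
      ≤ (A.card - j) • ∑ T ∈ A.powersetCard j, ∏ l ∈ T, x l := by
    rw [nsmul_eq_mul]
    have hc : (1:ℝ) ≤ ((A.card - j : ℕ) : ℝ) := by exact_mod_cast hcard
    nlinarith [hc, hσj]
  have h2 : (∑ T ∈ A.powersetCard j, ∏ l ∈ T, x l)
      ≤ μ⁻¹ * ∑ S ∈ A.powersetCard (j + 1), ∏ l ∈ S, x l := by
    calc (∑ T ∈ A.powersetCard j, ∏ l ∈ T, x l)
        ≤ (A.card - j) • ∑ T ∈ A.powersetCard j, ∏ l ∈ T, x l := h1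
      _ = ∑ S ∈ A.powersetCard (j + 1), ∑ i ∈ S, ∏ l ∈ S.erase i, x l := by
          rw [hdc, hrhs]
      _ ≤ μ⁻¹ * ∑ S ∈ A.powersetCard (j + 1), ∏ l ∈ S, x l := hlhs
  calc μ * ∑ T ∈ A.powersetCard j, ∏ l ∈ T, x l
      ≤ μ * (μ⁻¹ * ∑ S ∈ A.powersetCard (j + 1), ∏ l ∈ S, x l) :=
        mul_le_mul_of_nonneg_left h2 hμ.le
    _ = ∑ S ∈ A.powersetCard (j + 1), ∏ l ∈ S, x l := by
        field_simp

open Finset in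
/-- Splitting σ_k over `insert a A`. -/
lemma split_lemma {ι : Type*} [DecidableEq ι] (A : Finset ι) (a : ι) (ha : a ∉ A)
    (x : ι → ℝ) (k : ℕ) (hk : 1 ≤ k) :
    ∑ S ∈ (insert a A).powersetCard k, ∏ l ∈ S, x l
      = (∑ S ∈ A.powersetCard k, ∏ l ∈ S, x l)
        + x a * ∑ T ∈ A.powersetCard (k - 1), ∏ l ∈ T, x l := by
  classical
  rw [← Finset.sum_filter_add_sum_filter_not ((insert a A).powersetCard k) (fun S => a ∉ S)]
  congr 1
  · apply Finset.sum_congr _ (fun _ _ => rfl)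
    ext S
    simp only [Finset.mem_filter, Finset.mem_powersetCard]
    constructor
    · rintro ⟨⟨hS, hc⟩, haS⟩
      refine ⟨fun i hi => ?_, hc⟩
      rcases Finset.mem_insert.1 (hS hi) with rfl | h
      · exact absurd hi haS
      · exact h
    · rintro ⟨hS, hc⟩
      exact ⟨⟨hS.trans (Finset.subset_insert a A), hc⟩, fun haS => ha (hS haS)⟩
  · rw [Finset.mul_sum]
    refine Finset.sum_nbij' (fun S => S.erase a) (fun T => insert a T) ?_ ?_ ?_ ?_ ?_
    · intro S hS
      simp only [Finset.mem_filter, Finset.mem_powersetCard, not_not] at hS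
      obtain ⟨⟨hS, hc⟩, haS⟩ := hS
      rw [Finset.mem_powersetCard]
      constructor
      · intro i hi
        have := hS (Finset.erase_subset _ _ hi)
        rcases Finset.mem_insert.1 this with rfl | h
        · exact absurd hi (Finset.notMem_erase _ _)
        · exact h
      · rw [Finset.card_erase_of_mem haS, hc]
    · intro T hT
      rw [Finset.mem_powersetCard] at hT
      simp only [Finset.mem_filter, Finset.mem_powersetCard, not_not]
      have haT : a ∉ T := fun h => ha (hT.1 h)
      refine ⟨⟨Finset.insert_subset_insert a hT.1, ?_⟩, Finset.mem_insert_self _ _⟩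
      rw [Finset.card_insert_of_notMem haT, hT.2]; omega
    · intro S hS
      simp only [Finset.mem_filter, not_not] at hS
      exact Finset.insert_erase hS.2
    · intro T hT
      rw [Finset.mem_powersetCard] at hT
      exact Finset.erase_insert (fun h => ha (hT.1 h))
    · intro S hS
      simp only [Finset.mem_filter, not_not] at hS
      rw [← Finset.mul_prod_erase S x hS.2]

/-- If λ₁ ≥ ⋯ ≥ λₙ (n ≥ 2) solve ∑ arctan λᵢ = Θ with Θ ≥ (n-2)π/2,
then σ_k(λ) ≥ 0 for all 1 ≤ k ≤ n-1. -/
theorem slag_esymm_nonneg (n : ℕ) (hn : 2 ≤ n) (lam : Fin n → ℝ) (Θ : ℝ)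
    (hmono : ∀ i j : Fin n, i ≤ j → lam j ≤ lam i)
    (heq : ∑ i, Real.arctan (lam i) = Θ)
    (hΘ : ((n : ℝ) - 2) * Real.pi / 2 ≤ Θ) :
    ∀ k : ℕ, 1 ≤ k → k ≤ n - 1 → 0 ≤ esymmF k lam := by
  intro k hk1 hkn
  have hn0 : 0 < n := by omega
  set L : Fin n := ⟨n - 1, by omega⟩ with hL_def
  rcases le_or_gt 0 (lam L) with hL | hL
  · -- all entries nonnegative
    have hall : ∀ i : Fin n, 0 ≤ lam i := by
      intro i
      have : i ≤ L := by
        rw [Fin.le_def]; simp only [hL_def]; omega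
      exact le_trans hL (hmono i L this)
    apply Finset.sum_nonneg
    intro S _
    exact Finset.prod_nonneg fun i _ => hall i
  · -- λ_L < 0
    set μ : ℝ := -lam L with hμ_def
    have hμ : 0 < μ := by simp [hμ_def]; linarith
    set A : Finset (Fin n) := Finset.univ.erase L with hA_def
    have hcardA : A.card = n - 1 := by
      rw [hA_def, Finset.card_erase_of_mem (Finset.mem_univ L), Finset.card_univ,
        Fintype.card_fin]
    have htL : Real.arctan (lam L) < 0 := by
      rw [← Real.arctan_zero]
      exact Real.arctan_strictMono hL
    -- positivity of entries ≠ L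
    have hpos : ∀ i ∈ A, 0 < lam i := by
      intro i hiA
      have hiL : i ≠ L := Finset.ne_of_mem_erase hiA
      set B : Finset (Fin n) := A.erase i with hB_def
      have hcardB : B.card = n - 2 := by
        rw [hB_def, Finset.card_erase_of_mem hiA, hcardA]; omega
      have hsplit1 : ∑ j ∈ A, Real.arctan (lam j) + Real.arctan (lam L) = Θ := by
        rw [← heq, hA_def, Finset.sum_erase_add _ _ (Finset.mem_univ L)]
      have hsplit2 : ∑ j ∈ B, Real.arctan (lam j) + Real.arctan (lam i)
          = ∑ j ∈ A, Real.arctan (lam j) := by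
        rw [hB_def, Finset.sum_erase_add _ _ hiA]
      have hBbound : ∑ j ∈ B, Real.arctan (lam j) ≤ (n - 2 : ℕ) * (Real.pi / 2) := by
        calc ∑ j ∈ B, Real.arctan (lam j) ≤ B.card • (Real.pi / 2) :=
              Finset.sum_le_card_nsmul B _ _ (fun j _ => (Real.arctan_lt_pi_div_two _).le)
          _ = (n - 2 : ℕ) * (Real.pi / 2) := by rw [hcardB, nsmul_eq_mul]
      have hcast : ((n - 2 : ℕ) : ℝ) = (n : ℝ) - 2 := by
        push_cast [Nat.cast_sub hn]; ring
      have hsum2 : 0 ≤ Real.arctan (lam i) + Real.arctan (lam L) := by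
        have : ((n:ℝ) - 2) * Real.pi / 2 ≤ Θ := hΘ
        rw [hcast] at hBbound
        nlinarith [hBbound, hsplit1, hsplit2]
      have hti : 0 < Real.arctan (lam i) := by linarith
      rw [← Real.arctan_zero] at hti
      exact Real.arctan_strictMono.lt_iff_lt.1 hti
    -- key sum-of-inverses bound
    have hinv : ∑ i ∈ A, (lam i)⁻¹ ≤ μ⁻¹ := by
      have hAsum : ∑ i ∈ A, Real.arctan (lam i) = Θ - Real.arctan (lam L) := by
        rw [← heq, hA_def]
        have := Finset.sum_erase_add Finset.univ (fun i => Real.arctan (lam i))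
          (Finset.mem_univ L)
        linarith [this]
      have h1 : ∑ i ∈ A, Real.arctan ((lam i)⁻¹)
          = ∑ i ∈ A, (Real.pi / 2 - Real.arctan (lam i)) :=
        Finset.sum_congr rfl fun i hi => Real.arctan_inv_of_pos (hpos i hi)
      have h2 : ∑ i ∈ A, (Real.pi / 2 - Real.arctan (lam i))
          = (A.card : ℝ) * (Real.pi / 2) - ∑ i ∈ A, Real.arctan (lam i) := by
        rw [Finset.sum_sub_distrib, Finset.sum_const, nsmul_eq_mul]
      have hcast : ((n - 1 : ℕ) : ℝ) = (n : ℝ) - 1 := by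
        push_cast [Nat.cast_sub (by omega : 1 ≤ n)]; ring
      have hμL : Real.arctan μ = -Real.arctan (lam L) := by
        rw [hμ_def, Real.arctan_neg]
      have h3 : ∑ i ∈ A, Real.arctan ((lam i)⁻¹) ≤ Real.arctan μ⁻¹ := by
        rw [Real.arctan_inv_of_pos hμ, h1, h2, hAsum, hcardA, hcast]
        nlinarith [hΘ, hμL]
      have h4 : Real.arctan (∑ i ∈ A, (lam i)⁻¹) ≤ Real.arctan μ⁻¹ :=
        le_trans (arctan_sum_le A _ (fun i hi => (inv_nonneg.2 (hpos i hi).le))) h3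
      exact Real.arctan_strictMono.le_iff_le.1 h4
    -- conclude
    have huniv : (Finset.univ : Finset (Fin n)) = insert L A := by
      rw [hA_def, Finset.insert_erase (Finset.mem_univ L)]
    have hkA : k ≤ A.card := by rw [hcardA]; exact hkn
    have hkey := key_lemma A lam hpos μ hμ hinv k hk1 hkA
    have hσ : (0:ℝ) ≤ ∑ T ∈ A.powersetCard (k - 1), ∏ l ∈ T, lam l := by
      apply Finset.sum_nonneg
      intro T hT
      rw [Finset.mem_powersetCard] at hT
      exact Finset.prod_nonneg fun l hl => (hpos l (hT.1 hl)).le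
    have hsplit := split_lemma A L (Finset.notMem_erase L Finset.univ) lam k hk1
    unfold esymmF
    rw [huniv, hsplit]
    have hlamL : lam L = -μ := by rw [hμ_def]; ring
    rw [hlamL]
    nlinarith [hkey, hσ]
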